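/- Let D be a Gauss diagram of a virtual knot (a single circle) with n chords that admits an (integer-valued) Alexander numbering, so that the first elementary ideal ℰ₁(D) ⊆ ℤ[t^{±1}] is principal. If g ∈ ℤ[t^{±1}] is any generator of ℰ₁(D) (an Alexander polynomial Δ_D(t) of D), then the integer g(−1), the image of g under the evaluation t ↦ −1, is odd. -/

import Mathlib

noncomputable section

open scoped Classical

def FoxPair (R : Type) [CommRing R] : Type := Rˣ × R

namespace FoxPair

variable {R : Type} [CommRing R]

instance : Mul (FoxPair R) := ⟨fun a b => (a.1 * b.1, a.2 + (a.1 : R) * b.2)⟩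
instance : One (FoxPair R) := ⟨(1, 0)⟩
instance : Inv (FoxPair R) := ⟨fun a => (a.1⁻¹, -(((a.1⁻¹ : Rˣ) : R) * a.2))⟩

@[simp] lemma mul_def (a b : FoxPair R) :
    a * b = (a.1 * b.1, a.2 + (a.1 : R) * b.2) := rfl
@[simp] lemma one_def : (1 : FoxPair R) = ((1 : Rˣ), (0 : R)) := rfl
@[simp] lemma inv_def (a : FoxPair R) :
    a⁻¹ = (a.1⁻¹, -(((a.1⁻¹ : Rˣ) : R) * a.2)) := rfl

instance : Group (FoxPair R) where
  mul_assoc a b c := by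
    show ((a.1 * b.1) * c.1, (a.2 + (a.1 : R) * b.2) + ((a.1 * b.1 : Rˣ) : R) * c.2) =
      (a.1 * (b.1 * c.1), a.2 + (a.1 : R) * (b.2 + (b.1 : R) * c.2))
    refine Prod.ext ?_ ?_ <;> simp [Units.val_mul, mul_assoc, mul_add, add_assoc]
  one_mul a := by
    show ((1 : Rˣ) * a.1, (0 : R) + ((1 : Rˣ) : R) * a.2) = a
    refine Prod.ext ?_ ?_ <;> simp
  mul_one a := by
    show (a.1 * 1, a.2 + (a.1 : R) * 0) = a
    refine Prod.ext ?_ ?_ <;> simp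
  inv_mul_cancel a := by
    show (a.1⁻¹ * a.1, -(((a.1⁻¹ : Rˣ) : R) * a.2) + ((a.1⁻¹ : Rˣ) : R) * a.2) =
      ((1 : Rˣ), (0 : R))
    refine Prod.ext ?_ ?_ <;> simp

end FoxPair

def foxHom {α : Type} [DecidableEq α] {R : Type} [CommRing R] (φ : α → Rˣ) (x : α) :
    FreeGroup α →* FoxPair R :=
  FreeGroup.lift fun y => ((φ y, if y = x then (1 : R) else 0) : FoxPair R)

/-- The Fox derivative `∂w/∂x`, evaluated under the evaluation `φ` of the generators. -/
def fox {α : Type} [DecidableEq α] {R : Type} [CommRing R] (φ : α → Rˣ) (x : α)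
    (w : FreeGroup α) : R :=
  (foxHom φ x w).2

/-- A Gauss diagram: a finite set of chords, each with an arrowhead (`Sum.inl c`,
the under-crossing passage) and an arrowtail (`Sum.inr c`, the over-crossing passage)
and a sign (`true` = +1, `false` = −1); the endpoints are arranged on a disjoint
union of oriented circles, recorded by the successor permutation `next`. -/
structure GaussDiagram where
  Chord : Type
  [chordFintype : Fintype Chord]
  [chordDecEq : DecidableEq Chord]
  next : Equiv.Perm (Chord ⊕ Chord)
  sign : Chord → Bool

attribute [instance] GaussDiagram.chordFintype GaussDiagram.chordDecEq

namespace GaussDiagram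

variable (D : GaussDiagram)

abbrev Endpoint : Type := D.Chord ⊕ D.Chord
abbrev Arc : Type := D.Endpoint
def sgn (c : D.Chord) : ℤ := if D.sign c then 1 else -1
def ui (c : D.Chord) : D.Arc := Sum.inl c
def uo (c : D.Chord) : D.Arc := D.next (Sum.inl c)
def oi (c : D.Chord) : D.Arc := Sum.inr c
def oo (c : D.Chord) : D.Arc := D.next (Sum.inr c)

def IsAlexanderNumbering (p : ℕ) (lam : D.Arc → ZMod p) : Prop :=
  ∀ c : D.Chord,
    if D.sign c then
      lam (D.oi c) = lam (D.uo c) ∧ lam (D.ui c) = lam (D.oo c) ∧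
        lam (D.ui c) = lam (D.oi c) - 1
    else
      lam (D.ui c) = lam (D.oo c) ∧ lam (D.oi c) = lam (D.uo c) ∧
        lam (D.oi c) = lam (D.ui c) - 1

/-- The diagram consists of a single circle. -/
def SingleCircle : Prop := ∀ x y : D.Endpoint, ∃ k : ℕ, (⇑D.next)^[k] x = y

def tailRel : D.Endpoint → D.Endpoint → Prop :=
  fun x y => ∃ c : D.Chord, x = Sum.inr c ∧ y = D.next (Sum.inr c)

/-- Long arcs: maximal arcs between consecutive arrowheads. -/
def LongArc : Type := Quotient (Relation.EqvGen.setoid D.tailRel)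

instance : Fintype D.LongArc :=
  Fintype.ofSurjective (Quotient.mk _) fun q => Quotient.exists_rep q

def la (x : D.Endpoint) : D.LongArc := Quotient.mk _ x

/-- Wirtinger relator of a chord: `c = b^ε a b^{−ε}`. -/
def knotRel (c : D.Chord) : FreeGroup D.LongArc :=
  FreeGroup.of (D.la (D.next (Sum.inl c))) *
    (FreeGroup.of (D.la (Sum.inr c)) ^ D.sgn c * FreeGroup.of (D.la (Sum.inl c)) *
        FreeGroup.of (D.la (Sum.inr c)) ^ (-D.sgn c))⁻¹

/-- The Alexander matrix of the Wirtinger presentation of the knot group: Fox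
derivatives of the Wirtinger relators with respect to the long-arc generators,
evaluated by sending every generator to `t`. -/
def knotMatrix : Matrix D.Chord D.LongArc (LaurentPolynomial ℤ) :=
  fun c j =>
    fox (fun _ : D.LongArc => (LaurentPolynomial.isUnit_T (R := ℤ) 1).unit) j
      (D.knotRel c)

/-- The set of `(n−1) × (n−1)` minors of the Alexander matrix, `n` the number of
chords. -/
def minorSet : Set (LaurentPolynomial ℤ) :=
  {m | ∃ (f : Fin (Fintype.card D.Chord - 1) → D.Chord)
        (g : Fin (Fintype.card D.Chord - 1) → D.LongArc),
      Function.Injective f ∧ Function.Injective g ∧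
        m = (D.knotMatrix.submatrix f g).det}

/-- The first elementary ideal `ℰ₁(D) ⊆ ℤ[t^{±1}]`. -/
def elemIdeal₁ : Ideal (LaurentPolynomial ℤ) := Ideal.span D.minorSet

end GaussDiagram


namespace AlexOdd

open GaussDiagram Function LaurentPolynomial

/-! ### Fox derivative computations -/

lemma foxU_pos {α : Type} [DecidableEq α] {R : Type} [CommRing R] (u : Rˣ) (U A B j : α) :
    fox (fun _ => u) j (FreeGroup.of U * (FreeGroup.of B ^ (1:ℤ) * FreeGroup.of A *
      FreeGroup.of B ^ (-1:ℤ))⁻¹) =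
    (if U = j then 1 else 0) - (if A = j then 1 else 0) * u
      + (if B = j then 1 else 0) * ((u:R) - 1) := by
  have hv : (u : R) * ↑u⁻¹ = 1 := u.mul_inv
  simp only [fox, foxHom, zpow_one, zpow_neg_one, mul_inv_rev, inv_inv, map_mul, map_inv]
  erw [FreeGroup.lift_apply_of, FreeGroup.lift_apply_of, FreeGroup.lift_apply_of]
  erw [FoxPair.mul_def, FoxPair.mul_def, FoxPair.mul_def, FoxPair.inv_def, FoxPair.inv_def]
  simp only [FoxPair.mul_def, FoxPair.inv_def, mul_inv_rev, inv_inv, Units.val_mul]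
  linear_combination (-(if B = j then (1:R) else 0)*((u:R)*↑u⁻¹+1)
    - (u:R)*(if A = j then (1:R) else 0)) * hv

lemma foxU_neg {α : Type} [DecidableEq α] {R : Type} [CommRing R] (u : Rˣ) (U A B j : α) :
    fox (fun _ => u) j (FreeGroup.of U * (FreeGroup.of B ^ (-1:ℤ) * FreeGroup.of A *
      FreeGroup.of B ^ (1:ℤ))⁻¹) =
    (if U = j then 1 else 0) - (if A = j then 1 else 0) * ↑u⁻¹
      + (if B = j then 1 else 0) * ((↑u⁻¹:R) - 1) := by
  have hv : (u : R) * ↑u⁻¹ = 1 := u.mul_inv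
  simp only [fox, foxHom, zpow_one, zpow_neg_one, mul_inv_rev, inv_inv, map_mul, map_inv]
  erw [FreeGroup.lift_apply_of, FreeGroup.lift_apply_of, FreeGroup.lift_apply_of]
  erw [FoxPair.mul_def, FoxPair.mul_def, FoxPair.mul_def, FoxPair.inv_def, FoxPair.inv_def]
  simp only [FoxPair.mul_def, FoxPair.inv_def, mul_inv_rev, inv_inv, Units.val_mul]
  linear_combination ((if B = j then (1:R) else 0) * ((↑u⁻¹:R) - 1)
    - (↑u⁻¹:R) * (if A = j then (1:R) else 0)) * hv

/-! ### Walking to the next arrowhead -/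

section Walk

variable (D : GaussDiagram)
  (H : ∀ x : D.Endpoint, ∃ k : ℕ, ∃ c : D.Chord, (⇑D.next)^[k] x = Sum.inl c)

noncomputable def steps (x : D.Endpoint) : ℕ := Nat.find (H x)

noncomputable def endOf (x : D.Endpoint) : D.Chord := (Nat.find_spec (H x)).choose

lemma endOf_spec (x : D.Endpoint) :
    (⇑D.next)^[steps D H x] x = Sum.inl (endOf D H x) :=
  (Nat.find_spec (H x)).choose_spec

lemma steps_inl (c : D.Chord) : steps D H (Sum.inl c) = 0 :=
  Nat.find_eq_zero (H _) |>.2 ⟨c, rfl⟩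

lemma endOf_inl (c : D.Chord) : endOf D H (Sum.inl c) = c := by
  have h := endOf_spec D H (Sum.inl c)
  rw [steps_inl] at h
  exact (Sum.inl.inj h).symm

lemma steps_inr (c : D.Chord) :
    steps D H (Sum.inr c) = steps D H (D.next (Sum.inr c)) + 1 := by
  set y := D.next (Sum.inr c)
  have hle : steps D H (Sum.inr c) ≤ steps D H y + 1 := by
    apply Nat.find_le
    refine ⟨endOf D H y, ?_⟩
    rw [Function.iterate_succ_apply]
    exact endOf_spec D H y
  have hne : steps D H (Sum.inr c) ≠ 0 := by
    intro h0
    have h := endOf_spec D H (Sum.inr c)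
    rw [h0] at h
    simp at h
  obtain ⟨s, hs⟩ := Nat.exists_eq_succ_of_ne_zero hne
  have h := endOf_spec D H (Sum.inr c)
  rw [hs, Function.iterate_succ_apply] at h
  have : steps D H y ≤ s := Nat.find_le ⟨_, h⟩
  omega

lemma endOf_inr (c : D.Chord) :
    endOf D H (Sum.inr c) = endOf D H (D.next (Sum.inr c)) := by
  have h := endOf_spec D H (Sum.inr c)
  rw [steps_inr, Function.iterate_succ_apply] at h
  have h2 := endOf_spec D H (D.next (Sum.inr c))
  rw [h2] at h
  exact (Sum.inl.inj h).symm

lemma la_eq_aux : ∀ n : ℕ, ∀ x : D.Endpoint, steps D H x = n →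
    D.la x = D.la (Sum.inl (endOf D H x)) := by
  intro n
  induction n with
  | zero =>
    intro x hx
    have h := endOf_spec D H x
    rw [hx] at h
    simp only [Function.iterate_zero, id_eq] at h
    rw [h, endOf_inl]
  | succ n ih =>
    intro x hx
    cases x with
    | inl c => rw [endOf_inl]
    | inr c =>
      have h1 : D.la (Sum.inr c) = D.la (D.next (Sum.inr c)) :=
        Quotient.sound (Relation.EqvGen.rel _ _ ⟨c, rfl, rfl⟩)
      rw [h1, endOf_inr]
      apply ih
      have := steps_inr D H c
      omega

lemma la_eq (x : D.Endpoint) : D.la x = D.la (Sum.inl (endOf D H x)) :=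
  la_eq_aux D H _ x rfl

lemma endOf_eqvGen : ∀ a b : D.Endpoint, Relation.EqvGen D.tailRel a b →
    endOf D H a = endOf D H b := by
  intro a b h
  induction h with
  | rel x y hxy =>
    obtain ⟨c, rfl, rfl⟩ := hxy
    exact endOf_inr D H c
  | refl x => rfl
  | symm x y _ ih => exact ih.symm
  | trans x y z _ _ ih1 ih2 => exact ih1.trans ih2

noncomputable def headOf (q : D.LongArc) : D.Chord :=
  Quotient.lift (endOf D H) (endOf_eqvGen D H) q

lemma headOf_la (x : D.Endpoint) : headOf D H (D.la x) = endOf D H x := rfl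

include H in
lemma chi_inj : Function.Injective (fun c : D.Chord => D.la (Sum.inl c)) := by
  intro a b hab
  have h := congrArg (headOf D H) hab
  simpa only [headOf_la, endOf_inl] using h

noncomputable def tau (c : D.Chord) : D.Chord := endOf D H (D.next (Sum.inl c))

lemma la_uo (c : D.Chord) : D.la (D.uo c) = D.la (Sum.inl (tau D H c)) :=
  la_eq D H _

lemma tau_inj : Function.Injective (tau D H) := by
  have key : ∀ c c' : D.Chord, tau D H c = tau D H c' →
      steps D H (D.next (Sum.inl c)) ≤ steps D H (D.next (Sum.inl c')) → c = c' := by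
    intro c c' htau hle
    set y := D.next (Sum.inl c)
    set y' := D.next (Sum.inl c')
    set s := steps D H y with hsdef
    set s' := steps D H y' with hsdef'
    have h1 : (⇑D.next)^[s + 1] (Sum.inl c : D.Endpoint) = Sum.inl (tau D H c) := by
      rw [Function.iterate_succ_apply]; exact endOf_spec D H y
    have h2 : (⇑D.next)^[s' + 1] (Sum.inl c' : D.Endpoint) = Sum.inl (tau D H c) := by
      rw [Function.iterate_succ_apply, htau]; exact endOf_spec D H y'
    have he : s' + 1 = (s + 1) + (s' - s) := by omega
    rw [he, Function.iterate_add_apply] at h2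
    have hinj : Function.Injective ((⇑D.next)^[s + 1]) := D.next.injective.iterate _
    have h3 : (Sum.inl c : D.Endpoint) = (⇑D.next)^[s' - s] (Sum.inl c') :=
      hinj (h1.trans h2.symm)
    rcases Nat.eq_zero_or_pos (s' - s) with hd | hd
    · rw [hd] at h3
      exact Sum.inl.inj h3
    · exfalso
      obtain ⟨d, hdd⟩ := Nat.exists_eq_succ_of_ne_zero (Nat.pos_iff_ne_zero.1 hd)
      rw [hdd, Function.iterate_succ_apply] at h3
      have hP : ∃ e : D.Chord, (⇑D.next)^[d] y' = Sum.inl e := ⟨c, h3.symm⟩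
      have : s' ≤ d := Nat.find_le hP
      omega
  intro a b h
  rcases le_total (steps D H (D.next (Sum.inl a))) (steps D H (D.next (Sum.inl b))) with h' | h'
  · exact key a b h h'
  · exact (key b a h.symm h').symm

lemma tau_reach : ∀ j : ℕ, ∀ c d : D.Chord,
    (⇑D.next)^[j] (Sum.inl c : D.Endpoint) = Sum.inl d → ∃ m, (tau D H)^[m] c = d := by
  intro j
  induction j using Nat.strong_induction_on with
  | _ j ih =>
    intro c d hj
    rcases j with _ | j₀
    · exact ⟨0, Sum.inl.inj hj⟩
    · set y := D.next (Sum.inl c)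
      set s := steps D H y with hsdef
      rw [Function.iterate_succ_apply] at hj
      have hs : s ≤ j₀ := Nat.find_le ⟨d, hj⟩
      have h2 : (⇑D.next)^[s] y = Sum.inl (tau D H c) := endOf_spec D H y
      have h3 : (⇑D.next)^[j₀ - s] (Sum.inl (tau D H c) : D.Endpoint) = Sum.inl d := by
        rw [← h2, ← Function.iterate_add_apply]
        rw [show j₀ - s + s = j₀ by omega]
        exact hj
      obtain ⟨m, hm⟩ := ih (j₀ - s) (by omega) (tau D H c) d h3
      exact ⟨m + 1, by rw [Function.iterate_succ_apply]; exact hm⟩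

lemma tau_orbit (hknot : D.SingleCircle) (c0 : D.Chord) :
    (∀ a b : ℕ, a < Fintype.card D.Chord → b < Fintype.card D.Chord →
      (tau D H)^[a] c0 = (tau D H)^[b] c0 → a = b) ∧
    (tau D H)^[Fintype.card D.Chord] c0 = c0 := by
  set n := Fintype.card D.Chord with hn
  -- surjectivity of the orbit
  have surj : ∀ d : D.Chord, ∃ m, (tau D H)^[m] c0 = d := by
    intro d
    obtain ⟨j, hj⟩ := hknot (Sum.inl c0) (Sum.inl d)
    exact tau_reach D H j c0 d hj
  -- cancellation
  have cancel : ∀ a b : ℕ, a ≤ b → (tau D H)^[a] c0 = (tau D H)^[b] c0 →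
      (tau D H)^[b - a] c0 = c0 := by
    intro a b hab h
    have hinj : Function.Injective ((tau D H)^[a]) := (tau_inj D H).iterate _
    apply hinj
    rw [← Function.iterate_add_apply, show a + (b - a) = b by omega]
    exact h.symm
  have hper : ∃ k : ℕ, 0 < k ∧ (tau D H)^[k] c0 = c0 := by
    have hni : ¬ Function.Injective (fun i : Fin (n + 1) => (tau D H)^[(i : ℕ)] c0) := by
      intro hinj
      have := Fintype.card_le_of_injective _ hinj
      simp only [Fintype.card_fin] at this
      omega
    rw [Function.not_injective_iff] at hni
    obtain ⟨a, b, hab, hne⟩ := hni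
    rcases Nat.lt_or_ge (a : ℕ) (b : ℕ) with h | h
    · exact ⟨(b : ℕ) - (a : ℕ), by omega, cancel _ _ (le_of_lt h) hab⟩
    · have h' : (b : ℕ) < (a : ℕ) := by
        rcases Nat.lt_or_ge (b : ℕ) (a : ℕ) with h' | h'
        · exact h'
        · exact absurd (Fin.ext (le_antisymm h h')).symm hne
      exact ⟨(a : ℕ) - (b : ℕ), by omega, cancel _ _ (le_of_lt h') hab.symm⟩
  set p := Nat.find hper with hpdef
  obtain ⟨hp0, hpp⟩ : 0 < p ∧ (tau D H)^[p] c0 = c0 := Nat.find_spec hper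
  have injlt : ∀ a b : ℕ, a < b → b < p → (tau D H)^[a] c0 ≠ (tau D H)^[b] c0 := by
    intro a b hab hbp h
    have := cancel a b (le_of_lt hab) h
    exact Nat.find_min hper (show b - a < p by omega) ⟨by omega, this⟩
  have hmod : ∀ m : ℕ, (tau D H)^[m] c0 = (tau D H)^[m % p] c0 := by
    intro m
    induction m using Nat.strong_induction_on with
    | _ m ih =>
      rcases Nat.lt_or_ge m p with h | h
      · rw [Nat.mod_eq_of_lt h]
      · have h1 : (tau D H)^[m] c0 = (tau D H)^[m - p] c0 := by
          have h2 := Function.iterate_add_apply (tau D H) (m - p) p c0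
          rw [hpp, Nat.sub_add_cancel h] at h2
          exact h2
        rw [h1, ih (m - p) (by omega), Nat.mod_eq_sub_mod h]
  have hnp : n ≤ p := by
    have hsurj : Function.Surjective (fun i : Fin p => (tau D H)^[(i : ℕ)] c0) := by
      intro d
      obtain ⟨m, hm⟩ := surj d
      refine ⟨⟨m % p, Nat.mod_lt _ hp0⟩, ?_⟩
      show (tau D H)^[m % p] c0 = d
      rw [← hmod]; exact hm
    have := Fintype.card_le_of_surjective _ hsurj
    simpa using this
  have hpn : p ≤ n := by
    have hinj : Function.Injective (fun i : Fin p => (tau D H)^[(i : ℕ)] c0) := by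
      intro a b h
      by_contra hne
      rcases Nat.lt_or_ge (a : ℕ) (b : ℕ) with h' | h'
      · exact injlt _ _ h' b.isLt h
      · have h'' : (b : ℕ) < (a : ℕ) := by
          rcases Nat.lt_or_ge (b : ℕ) (a : ℕ) with h'' | h''
          · exact h''
          · exact absurd (Fin.ext (le_antisymm h' h'')).symm hne
        exact injlt _ _ h'' a.isLt h.symm
    have := Fintype.card_le_of_injective _ hinj
    simpa using this
  have hpe : p = n := le_antisymm hpn hnp
  constructor
  · intro a b ha hb h
    by_contra hne
    rcases Nat.lt_or_ge a b with h' | h'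
    · exact injlt a b h' (by omega) h
    · exact injlt b a (by omega) (by omega) h.symm
  · rw [← hpe]; exact hpp

end Walk

/-! ### The Alexander matrix mod 2 at `t = -1` -/

lemma knotMatrix_psi (D : GaussDiagram) (ψ : LaurentPolynomial ℤ →+* ZMod 2)
    (hψ : ψ (LaurentPolynomial.T 1) = 1) (c : D.Chord) (j : D.LongArc) :
    ψ (D.knotMatrix c j) =
      (if D.la (D.uo c) = j then 1 else 0) + (if D.la (D.ui c) = j then 1 else 0) := by
  set u := (LaurentPolynomial.isUnit_T (R := ℤ) 1).unit with hu_def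
  have hu : ψ ↑u = 1 := by
    rw [IsUnit.unit_spec]; exact hψ
  have hv : ψ ↑u⁻¹ = 1 := by
    have h := congrArg ψ u.inv_mul
    rw [map_mul, hu, mul_one, map_one] at h
    exact h
  show ψ (fox (fun _ : D.LongArc => u) j (D.knotRel c)) = _
  unfold GaussDiagram.knotRel
  simp only [GaussDiagram.uo, GaussDiagram.ui]
  rcases hsign : D.sign c with _ | _
  · have hs : D.sgn c = -1 := by simp [GaussDiagram.sgn, hsign]
    rw [hs, neg_neg, foxU_neg]
    simp only [map_add, map_sub, map_mul, map_one, map_zero, apply_ite ψ, hu, hv]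
    split_ifs <;> simp_all <;> decide
  · have hs : D.sgn c = 1 := by simp [GaussDiagram.sgn, hsign]
    rw [hs, show -(1:ℤ) = (-1:ℤ) by norm_num, foxU_pos]
    simp only [map_add, map_sub, map_mul, map_one, map_zero, apply_ite ψ, hu, hv]
    split_ifs <;> simp_all <;> decide

end AlexOdd

/-- The Alexander polynomial of an almost classical knot, i.e. any
generator of its (principal) first elementary ideal, evaluates at `t = −1` to an odd
integer. -/
theorem alexanderPolynomial_det_odd (D : GaussDiagram) (hknot : D.SingleCircle)
    (lam : D.Arc → ℤ) (h : D.IsAlexanderNumbering 0 lam)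
    (g : LaurentPolynomial ℤ) (hg : D.elemIdeal₁ = Ideal.span {g})
    (f : LaurentPolynomial ℤ →+* ℤ) (hf : f (LaurentPolynomial.T 1) = -1) :
    Odd (f g) := by
  classical
  set ψ : LaurentPolynomial ℤ →+* ZMod 2 := (Int.castRingHom (ZMod 2)).comp f with hψdef
  have hψT : ψ (LaurentPolynomial.T 1) = 1 := by
    rw [hψdef, RingHom.comp_apply, hf]
    decide
  have key : ∃ m ∈ D.minorSet, ψ m = 1 := by
    rcases isEmpty_or_nonempty D.Chord with hE | hNE
    · have hcard : Fintype.card D.Chord = 0 := Fintype.card_eq_zero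
      haveI : IsEmpty (Fin (Fintype.card D.Chord - 1)) := by
        rw [show Fintype.card D.Chord - 1 = 0 by omega]
        infer_instance
      refine ⟨_, ⟨fun i => isEmptyElim i, fun i => isEmptyElim i,
        fun i => isEmptyElim i, fun i => isEmptyElim i, rfl⟩, ?_⟩
      rw [Matrix.det_isEmpty, map_one]
    · obtain ⟨c0⟩ := hNE
      have H : ∀ x : D.Endpoint, ∃ k : ℕ, ∃ c : D.Chord, (⇑D.next)^[k] x = Sum.inl c := by
        intro x
        obtain ⟨k, hk⟩ := hknot x (Sum.inl c0)
        exact ⟨k, c0, hk⟩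
      haveI : Nonempty D.Chord := ⟨c0⟩
      have hn1 : 1 ≤ Fintype.card D.Chord := Fintype.card_pos
      obtain ⟨inj, per⟩ := AlexOdd.tau_orbit D H hknot c0
      set τ : D.Chord → D.Chord := AlexOdd.tau D H with hτ
      set fr : Fin (Fintype.card D.Chord - 1) → D.Chord :=
        fun k => τ^[(k : ℕ) + 1] c0 with hfr
      set gc : Fin (Fintype.card D.Chord - 1) → D.LongArc :=
        fun k => D.la (Sum.inl (fr k)) with hgc
      have frinj : Function.Injective fr := by
        intro a b hab
        have ha := a.isLt
        have hb := b.isLt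
        have := inj ((a : ℕ) + 1) ((b : ℕ) + 1) (by omega) (by omega) hab
        exact Fin.ext (by omega)
      have gcinj : Function.Injective gc := fun a b h =>
        frinj (AlexOdd.chi_inj D H h)
      refine ⟨_, ⟨fr, gc, frinj, gcinj, rfl⟩, ?_⟩
      rw [RingHom.map_det]
      have hentry : ∀ i j : Fin (Fintype.card D.Chord - 1),
          (ψ.mapMatrix (D.knotMatrix.submatrix fr gc)) i j
            = (if (j : ℕ) = (i : ℕ) + 1 then 1 else 0) + (if i = j then 1 else 0) := by
        intro i j
        have h1 : (ψ.mapMatrix (D.knotMatrix.submatrix fr gc)) i j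
            = ψ (D.knotMatrix (fr i) (gc j)) := rfl
        rw [h1, AlexOdd.knotMatrix_psi D ψ hψT]
        have hi := i.isLt
        have hj := j.isLt
        congr 1
        · have e1 : D.la (D.uo (fr i)) = D.la (Sum.inl (τ^[(i : ℕ) + 1 + 1] c0)) := by
            rw [AlexOdd.la_uo D H, Function.iterate_succ_apply' τ ((i : ℕ) + 1) c0]
          have e2 : (D.la (D.uo (fr i)) = gc j) ↔ ((j : ℕ) = (i : ℕ) + 1) := by
            rw [e1]
            constructor
            · intro h
              have h' : τ^[(i : ℕ) + 1 + 1] c0 = τ^[(j : ℕ) + 1] c0 :=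
                AlexOdd.chi_inj D H h
              rcases eq_or_lt_of_le (show (i : ℕ) + 1 + 1 ≤ Fintype.card D.Chord by omega)
                with he | hlt
              · rw [he, per] at h'
                have h0 : τ^[0] c0 = τ^[(j : ℕ) + 1] c0 := h'
                have := inj 0 ((j : ℕ) + 1) (by omega) (by omega) h0
                omega
              · have := inj ((i : ℕ) + 1 + 1) ((j : ℕ) + 1) (by omega) (by omega) h'
                omega
            · intro h
              have h' : (j : ℕ) + 1 = (i : ℕ) + 1 + 1 := by omega
              rw [hgc]
              show D.la (Sum.inl (τ^[(i : ℕ) + 1 + 1] c0)) = D.la (Sum.inl (τ^[(j : ℕ) + 1] c0))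
              rw [h']
          simp only [e2]
        · have e3 : (D.la (D.ui (fr i)) = gc j) ↔ (i = j) := by
            constructor
            · intro h
              exact frinj (AlexOdd.chi_inj D H h)
            · rintro rfl
              rfl
          simp only [e3]
      have htri : (ψ.mapMatrix (D.knotMatrix.submatrix fr gc)).BlockTriangular id := by
        intro i j hij
        rw [hentry]
        have hij' : (j : ℕ) < (i : ℕ) := hij
        have h1 : ¬((j : ℕ) = (i : ℕ) + 1) := by omega
        have h2 : ¬(i = j) := by
          intro h
          rw [h] at hij'
          omega
        simp [h1, h2]
      rw [Matrix.det_of_upperTriangular htri]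
      have hdiag : ∀ i ∈ Finset.univ,
          (ψ.mapMatrix (D.knotMatrix.submatrix fr gc)) i i = 1 := by
        intro i _
        rw [hentry]
        simp
      rw [Finset.prod_congr rfl hdiag]
      simp
  obtain ⟨m, hmem, hψm⟩ := key
  have hdvd : g ∣ m := by
    have hm : m ∈ D.elemIdeal₁ := Ideal.subset_span hmem
    rw [hg, Ideal.mem_span_singleton] at hm
    exact hm
  rw [← Int.not_even_iff_odd]
  intro hev
  have h2 : (2 : ℤ) ∣ f m := by
    obtain ⟨k, hk⟩ := hdvd
    obtain ⟨l, hl⟩ := hev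
    exact ⟨l * f k, by rw [hk, map_mul, hl]; ring⟩
  have h3 : ((f m : ℤ) : ZMod 2) = 0 := by
    rw [ZMod.intCast_zmod_eq_zero_iff_dvd]
    exact_mod_cast h2
  have h4 : ψ m = 0 := h3
  rw [hψm] at h4
  exact one_ne_zero h4
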